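/- Let 𝔻 = {z ∈ ℂ : |z| < 1} be the open unit disk, let a ∈ (0,1), and let h : 𝔻 → 𝔻 be the Möbius transformation h(z) = (z + a)/(1 + a·z), so that h(0) = a. Then for every ε > 0 there exist distinct points x, y ∈ 𝔻 with s_𝔻(h(x), h(y)) > (1 + a − ε) · s_𝔻(x,y). (Indeed, taking x = 0 and y = 1/(1 + v(1+a)) for v > 0, the ratio s_𝔻(h(x),h(y))/s_𝔻(x,y) equals (1 + 2v(1+a))/(1 + 2v), which tends to 1 + a as v → ∞.) Consequently L(a) = sup{ s_𝔻(g(x),g(y))/s_𝔻(x,y) : x ≠ y in 𝔻, g a Möbius self-map of 𝔻 with |g(0)| = a } satisfies L(a) ≥ 1 + a. -/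

import Mathlib

open Metric Set

/-- The triangular ratio metric in the plane:
`s_G(x,y) = sup_{z ∈ ∂G} |x-y|/(|x-z|+|z-y|)`. -/
noncomputable def triangularRatioC (G : Set ℂ) (x y : ℂ) : ℝ :=
  ⨆ z : frontier G, dist x y / (dist x z.1 + dist z.1 y)

lemma sDisk_real (p q : ℝ) (hp : 0 ≤ p) (hpq : p < q) (hq : q < 1) :
    triangularRatioC (Metric.ball (0 : ℂ) 1) (p : ℂ) (q : ℂ) = (q - p) / (2 - p - q) := by
  have hden : (0:ℝ) < 2 - p - q := by linarith
  have hfr : frontier (Metric.ball (0 : ℂ) 1) = Metric.sphere (0 : ℂ) 1 :=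
    frontier_ball 0 one_ne_zero
  have hdpq : dist (p:ℂ) (q:ℂ) = q - p := by
    rw [Complex.dist_eq, show (p:ℂ) - q = ((p - q : ℝ):ℂ) by push_cast; ring,
      Complex.norm_real, Real.norm_eq_abs, abs_of_nonpos (by linarith)]
    ring
  have hbound : ∀ z : ℂ, z ∈ frontier (Metric.ball (0 : ℂ) 1) →
      (q - p) / (dist (p:ℂ) z + dist z (q:ℂ)) ≤ (q - p)/(2 - p - q) := by
    intro z hz
    rw [hfr, mem_sphere_iff_norm, sub_zero] at hz
    have hz0 : dist z (0:ℂ) = 1 := by simp [dist_eq_norm, hz]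
    have hdp : 1 - p ≤ dist (p:ℂ) z := by
      have h := dist_triangle z (p:ℂ) 0
      have : dist (p:ℂ) 0 = p := by simp [Complex.dist_eq, abs_of_nonneg hp]
      rw [dist_comm (p:ℂ) z]
      linarith
    have hdq : 1 - q ≤ dist z (q:ℂ) := by
      have h := dist_triangle z (q:ℂ) 0
      have : dist (q:ℂ) 0 = q := by
        simp [Complex.dist_eq, abs_of_nonneg (le_trans hp hpq.le)]
      linarith
    apply div_le_div_of_nonneg_left (by linarith) hden (by linarith)
  have h1mem : (1 : ℂ) ∈ frontier (Metric.ball (0 : ℂ) 1) := by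
    rw [hfr]; simp
  have hval : dist (p:ℂ) (1:ℂ) + dist (1:ℂ) (q:ℂ) = 2 - p - q := by
    have e1 : dist (p:ℂ) (1:ℂ) = 1 - p := by
      rw [Complex.dist_eq, show (p:ℂ) - 1 = ((p - 1 : ℝ):ℂ) by push_cast; ring,
        Complex.norm_real, Real.norm_eq_abs, abs_of_nonpos (by linarith)]
      ring
    have e2 : dist (1:ℂ) (q:ℂ) = 1 - q := by
      rw [Complex.dist_eq, show (1:ℂ) - q = ((1 - q : ℝ):ℂ) by push_cast; ring,
        Complex.norm_real, Real.norm_eq_abs, abs_of_nonneg (by linarith)]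
    rw [e1, e2]; ring
  haveI : Nonempty (frontier (Metric.ball (0 : ℂ) 1)) := ⟨⟨1, h1mem⟩⟩
  unfold triangularRatioC
  simp only [hdpq]
  apply le_antisymm
  · exact ciSup_le fun z => hbound z.1 z.2
  · have hb : BddAbove (Set.range fun z : frontier (Metric.ball (0 : ℂ) 1) =>
        (q - p) / (dist (p:ℂ) z.1 + dist z.1 (q:ℂ))) :=
      ⟨(q - p)/(2 - p - q), by rintro _ ⟨z, rfl⟩; exact hbound z.1 z.2⟩
    have h := le_ciSup hb ⟨1, h1mem⟩
    rw [hval] at h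
    exact h

/-- For `a ∈ (0,1)` and the Möbius self-map `h(z) = (z+a)/(1+az)` of the unit disk 𝔻
(with `h(0) = a`): for every `ε > 0` there are distinct `x, y ∈ 𝔻` with
`s_𝔻(h x, h y) > (1 + a - ε) s_𝔻(x, y)`.  Hence
`L(a) = sup s_𝔻(g x, g y)/s_𝔻(x,y)` over Möbius self-maps `g` of 𝔻 with `|g 0| = a`
satisfies `L(a) ≥ 1 + a`. -/
theorem s_disk_moebius_expansion_ge_one_add_a (a : ℝ) (ha0 : 0 < a) (ha1 : a < 1) :
    ∀ ε : ℝ, 0 < ε → ∃ x y : ℂ, x ∈ Metric.ball (0 : ℂ) 1 ∧ y ∈ Metric.ball (0 : ℂ) 1 ∧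
      x ≠ y ∧
      triangularRatioC (Metric.ball (0 : ℂ) 1)
          ((x + (a : ℂ)) / (1 + (a : ℂ) * x)) ((y + (a : ℂ)) / (1 + (a : ℂ) * y)) >
        (1 + a - ε) * triangularRatioC (Metric.ball (0 : ℂ) 1) x y := by
  intro ε hε
  set r : ℝ := min ε 1 / 2 with hr_def
  have hr0 : 0 < r := by positivity
  have hrε : r ≤ ε / 2 := by
    have : min ε 1 ≤ ε := min_le_left _ _
    simp only [hr_def]; linarith
  have hr1 : r ≤ 1 / 2 := by
    have : min ε 1 ≤ 1 := min_le_right _ _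
    simp only [hr_def]; linarith
  have hr1' : r < 1 := by linarith
  set t : ℝ := (r + a) / (1 + a * r) with ht_def
  have h1ar : (0:ℝ) < 1 + a * r := by nlinarith
  have ht1 : t < 1 := by
    rw [ht_def, div_lt_one h1ar]; nlinarith
  have hat : a < t := by
    rw [ht_def, lt_div_iff₀ h1ar]; nlinarith [mul_lt_mul_of_pos_right (show a * a < 1 by nlinarith) hr0]
  refine ⟨0, (r : ℂ), by simp, ?_, ?_, ?_⟩
  · simp only [mem_ball, dist_zero_right, Complex.norm_real]
    rw [Real.norm_eq_abs, abs_of_pos hr0]; exact hr1'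
  · intro h
    apply absurd h.symm
    simp only [ne_eq, Complex.ofReal_eq_zero]
    exact hr0.ne'
  · have e0 : ((0:ℂ) + (a:ℂ)) / (1 + (a:ℂ) * 0) = ((a:ℝ) : ℂ) := by
      norm_num
    have hne : (1 + (a:ℂ) * (r:ℂ)) ≠ 0 := by
      have h := Complex.ofReal_ne_zero.mpr h1ar.ne'
      push_cast at h; exact h
    have e1 : (((r:ℂ)) + (a:ℂ)) / (1 + (a:ℂ) * (r:ℂ)) = ((t:ℝ) : ℂ) := by
      rw [ht_def]
      push_cast
      rw [div_eq_div_iff hne hne]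
    rw [e0, e1]
    have s1 : triangularRatioC (Metric.ball (0 : ℂ) 1) ((a:ℝ):ℂ) ((t:ℝ):ℂ)
        = (t - a) / (2 - a - t) := sDisk_real a t ha0.le hat ht1
    have s2 : triangularRatioC (Metric.ball (0 : ℂ) 1) (0:ℂ) ((r:ℝ):ℂ)
        = (r - 0) / (2 - 0 - r) := by
      have := sDisk_real 0 r le_rfl hr0 hr1'
      simpa using this
    rw [s1, s2]
    rw [gt_iff_lt, sub_zero, sub_zero, ← mul_div_assoc,
      div_lt_div_iff₀ (by linarith) (by linarith)]
    have hteq : t * (1 + a * r) = r + a := by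
      rw [ht_def, div_mul_cancel₀]; exact h1ar.ne'
    have hmain : r * (a * (1 + a)) + r * (ε * (1 - a)) < 2 * ε := by
      nlinarith [mul_lt_mul_of_pos_left (show a * (1 + a) < 2 by nlinarith) hr0,
        mul_le_mul_of_nonneg_left (show ε * (1 - a) ≤ ε by nlinarith) hr0.le,
        mul_le_mul_of_nonneg_right hr1 hε.le]
    have hpos : 0 < 2 * ε - r * a * (1 + a) - r * ε * (1 - a) := by nlinarith
    have key : (1 + a - ε) * (r * ((2 - a) * (1 + a * r) - (r + a)))
        < r * (1 - a ^ 2) * (2 - r) := by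
      nlinarith [mul_pos (mul_pos hr0 (show (0:ℝ) < 1 - a by linarith)) hpos]
    have hAD : (1 + a - ε) * r * (2 - a - t) * (1 + a * r)
        = (1 + a - ε) * (r * ((2 - a) * (1 + a * r) - (r + a))) := by
      linear_combination (-(1 + a - ε) * r) * hteq
    have hBD : (t - a) * (2 - r) * (1 + a * r) = r * (1 - a ^ 2) * (2 - r) := by
      linear_combination (2 - r) * hteq
    have hfin : (1 + a - ε) * r * (2 - a - t) * (1 + a * r)
        < (t - a) * (2 - r) * (1 + a * r) := by
      rw [hAD, hBD]; exact key
    have := (mul_lt_mul_iff_of_pos_right h1ar).mp hfin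
    linarith [this]
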